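/- Let $u>0$ and let $g_F(x)=F^2\alpha\int_0^x \sqrt{w}\,e^{-(\beta\sqrt{w})^u}dw$. There exists a critical value $F_c>0$ such that: (i) if $0<F<F_c$ then $0$ is the only fixed point of $g_F$ on $[0,\infty)$; (ii) if $F>F_c$ then $g_F$ has exactly three fixed points $0<\ell_1<x^*$ on $[0,\infty)$. -/

import Mathlib

open Real MeasureTheory intervalIntegral Set Filter Topology

noncomputable def ff (u β : ℝ) : ℝ → ℝ := fun w => Real.sqrt w * Real.exp (-(β * Real.sqrt w) ^ u)
noncomputable def HH (u α β : ℝ) : ℝ → ℝ := fun x => α * ∫ w in (0:ℝ)..x, ff u β w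
noncomputable def qq (u α β : ℝ) : ℝ → ℝ := fun x => x * (α * ff u β x) - HH u α β x
noncomputable def pp (u α β : ℝ) : ℝ → ℝ := fun x => HH u α β x / x
noncomputable def mm (u β : ℝ) : ℝ := ((1/u) ^ (1/u : ℝ) / β) ^ (2:ℕ)

section Facts
variable {u α β x : ℝ}

lemma ff_cont (hu : 0 < u) : Continuous (ff u β) := by
  apply Real.continuous_sqrt.mul
  apply Real.continuous_exp.comp
  apply Continuous.neg
  exact (continuous_const.mul Real.continuous_sqrt).rpow_const (fun x => Or.inr hu.le)

lemma ff_nonneg (x : ℝ) : 0 ≤ ff u β x := mul_nonneg (Real.sqrt_nonneg _) (Real.exp_pos _).le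

lemma ff_pos (hx : 0 < x) : 0 < ff u β x := mul_pos (Real.sqrt_pos.mpr hx) (Real.exp_pos _)

lemma ff_zero : ff u β 0 = 0 := by simp [ff]

lemma HH_hasDeriv (hu : 0 < u) (x : ℝ) : HasDerivAt (HH u α β) (α * ff u β x) x := by
  have h := (intervalIntegral.integral_hasDerivAt_right
    ((ff_cont hu (β := β)).intervalIntegrable 0 x)
    ((ff_cont hu (β := β)).stronglyMeasurableAtFilter _ _)
    (ff_cont hu (β := β)).continuousAt)
  exact h.const_mul α

lemma HH_cont (hu : 0 < u) : Continuous (HH u α β) :=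
  continuous_iff_continuousAt.mpr (fun x => (HH_hasDeriv (α := α) hu x).continuousAt)

lemma HH_zero : HH u α β 0 = 0 := by simp [HH]

lemma HH_strictMono (hu : 0 < u) (hα : 0 < α) : StrictMonoOn (HH u α β) (Ici 0) := by
  apply strictMonoOn_of_deriv_pos (convex_Ici 0) (HH_cont hu).continuousOn
  intro x hx
  rw [interior_Ici] at hx
  rw [(HH_hasDeriv hu x).deriv]
  exact mul_pos hα (ff_pos hx)

lemma HH_pos (hu : 0 < u) (hα : 0 < α) (hx : 0 < x) : 0 < HH u α β x := by
  have := HH_strictMono (β := β) hu hα (self_mem_Ici) (le_of_lt hx) hx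
  rwa [HH_zero] at this

lemma ff_hasDeriv (hu : 0 < u) (hβ : 0 < β) (hx : 0 < x) :
    HasDerivAt (ff u β)
      (Real.exp (-(β * Real.sqrt x) ^ u) / (2 * Real.sqrt x) * (1 - u * (β * Real.sqrt x) ^ u)) x := by
  have hsx : 0 < Real.sqrt x := Real.sqrt_pos.mpr hx
  have ht : 0 < β * Real.sqrt x := mul_pos hβ hsx
  have hs : HasDerivAt Real.sqrt (1 / (2 * Real.sqrt x)) x := Real.hasDerivAt_sqrt hx.ne'
  have hbs : HasDerivAt (fun y => β * Real.sqrt y) (β * (1 / (2 * Real.sqrt x))) x := hs.const_mul β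
  have hpow : HasDerivAt (fun t : ℝ => t ^ u) (u * (β * Real.sqrt x) ^ (u - 1)) (β * Real.sqrt x) :=
    Real.hasDerivAt_rpow_const (Or.inl ht.ne')
  have hinner : HasDerivAt (fun y => (β * Real.sqrt y) ^ u)
      (u * (β * Real.sqrt x) ^ (u - 1) * (β * (1 / (2 * Real.sqrt x)))) x := by have := hpow.comp x hbs; exact this
  have hexp : HasDerivAt (fun y => Real.exp (-(β * Real.sqrt y) ^ u))
      (Real.exp (-(β * Real.sqrt x) ^ u) * -(u * (β * Real.sqrt x) ^ (u - 1) * (β * (1 / (2 * Real.sqrt x))))) x :=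
    (hinner.neg).exp
  have h : HasDerivAt (fun y => Real.sqrt y * Real.exp (-(β * Real.sqrt y) ^ u)) _ x := hs.mul hexp
  convert h using 1
  · rfl
  have key : (β * Real.sqrt x) ^ (u - 1) * (β * Real.sqrt x) = (β * Real.sqrt x) ^ u := by
    rw [← Real.rpow_add_one ht.ne' (u - 1)]; ring_nf
  have hsx' : Real.sqrt x ≠ 0 := hsx.ne'
  field_simp
  linear_combination u * key

lemma mm_pos (hu : 0 < u) (hβ : 0 < β) : 0 < mm u β := by
  have h1 : 0 < (1/u) ^ (1/u : ℝ) / β := by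
    have : 0 < (1/u) ^ (1/u : ℝ) := Real.rpow_pos_of_pos (by positivity) _
    positivity
  exact pow_pos h1 2

lemma sqrt_mm (hu : 0 < u) (hβ : 0 < β) :
    Real.sqrt (mm u β) = (1/u) ^ (1/u : ℝ) / β := by
  rw [mm, Real.sqrt_sq (by positivity)]

lemma pow_lt_of_lt_mm (hu : 0 < u) (hβ : 0 < β) (hx : 0 ≤ x) (hxm : x < mm u β) :
    (β * Real.sqrt x) ^ u < 1/u := by
  have h1 : Real.sqrt x < (1/u) ^ (1/u : ℝ) / β := by
    rw [← sqrt_mm hu hβ]; exact Real.sqrt_lt_sqrt hx hxm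
  have h2 : β * Real.sqrt x < (1/u) ^ (1/u : ℝ) := by
    rw [lt_div_iff₀ hβ] at h1; linarith [h1]
  calc (β * Real.sqrt x) ^ u < ((1/u) ^ (1/u : ℝ)) ^ u :=
        Real.rpow_lt_rpow (by positivity) h2 hu
    _ = 1/u := by
        rw [← Real.rpow_mul (by positivity), one_div_mul_cancel hu.ne', Real.rpow_one]

lemma pow_gt_of_gt_mm (hu : 0 < u) (hβ : 0 < β) (hxm : mm u β < x) :
    1/u < (β * Real.sqrt x) ^ u := by
  have h1 : (1/u) ^ (1/u : ℝ) / β < Real.sqrt x := by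
    rw [← sqrt_mm hu hβ]; exact Real.sqrt_lt_sqrt (mm_pos hu hβ).le hxm
  have h2 : (1/u) ^ (1/u : ℝ) < β * Real.sqrt x := by
    rw [div_lt_iff₀ hβ] at h1; linarith [h1]
  calc (1/u : ℝ) = ((1/u) ^ (1/u : ℝ)) ^ u := by
        rw [← Real.rpow_mul (by positivity), one_div_mul_cancel hu.ne', Real.rpow_one]
    _ < (β * Real.sqrt x) ^ u := Real.rpow_lt_rpow (by positivity) h2 hu

lemma ffderiv_pos (hu : 0 < u) (hβ : 0 < β) (hx : 0 < x) (hxm : x < mm u β) :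
    0 < Real.exp (-(β * Real.sqrt x) ^ u) / (2 * Real.sqrt x) * (1 - u * (β * Real.sqrt x) ^ u) := by
  have h1 := pow_lt_of_lt_mm hu hβ hx.le hxm
  have h2 : u * (β * Real.sqrt x) ^ u < 1 := by
    rw [lt_div_iff₀ hu] at h1; linarith [h1]
  have hsx : 0 < Real.sqrt x := Real.sqrt_pos.mpr hx
  have : 0 < Real.exp (-(β * Real.sqrt x) ^ u) / (2 * Real.sqrt x) := by positivity
  nlinarith

lemma ffderiv_neg (hu : 0 < u) (hβ : 0 < β) (hxm : mm u β < x) :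
    Real.exp (-(β * Real.sqrt x) ^ u) / (2 * Real.sqrt x) * (1 - u * (β * Real.sqrt x) ^ u) < 0 := by
  have hx : 0 < x := lt_trans (mm_pos hu hβ) hxm
  have h1 := pow_gt_of_gt_mm hu hβ hxm
  have h2 : 1 < u * (β * Real.sqrt x) ^ u := by
    rw [div_lt_iff₀ hu] at h1; linarith [h1]
  have hsx : 0 < Real.sqrt x := Real.sqrt_pos.mpr hx
  have : 0 < Real.exp (-(β * Real.sqrt x) ^ u) / (2 * Real.sqrt x) := by positivity
  nlinarith

lemma ff_strictMono (hu : 0 < u) (hβ : 0 < β) : StrictMonoOn (ff u β) (Icc 0 (mm u β)) := by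
  apply strictMonoOn_of_deriv_pos (convex_Icc _ _) (ff_cont hu).continuousOn
  intro x hx
  rw [interior_Icc] at hx
  rw [(ff_hasDeriv hu hβ hx.1).deriv]
  exact ffderiv_pos hu hβ hx.1 hx.2

lemma ff_anti (hu : 0 < u) (hβ : 0 < β) : AntitoneOn (ff u β) (Ici (mm u β)) := by
  apply antitoneOn_of_deriv_nonpos (convex_Ici _) (ff_cont hu).continuousOn
  · intro x hx
    rw [interior_Ici] at hx
    exact (ff_hasDeriv hu hβ (lt_trans (mm_pos hu hβ) hx)).differentiableAt.differentiableWithinAt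
  · intro x hx
    rw [interior_Ici] at hx
    rw [(ff_hasDeriv hu hβ (lt_trans (mm_pos hu hβ) hx)).deriv]
    exact (ffderiv_neg hu hβ hx).le

lemma qq_cont (hu : 0 < u) : Continuous (qq u α β) :=
  ((continuous_id.mul (continuous_const.mul (ff_cont hu)))).sub (HH_cont hu)

lemma qq_hasDeriv (hu : 0 < u) (hβ : 0 < β) (hx : 0 < x) :
    HasDerivAt (qq u α β)
      (x * (α * (Real.exp (-(β * Real.sqrt x) ^ u) / (2 * Real.sqrt x) * (1 - u * (β * Real.sqrt x) ^ u)))) x := by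
  have h1 : HasDerivAt (fun y => y * (α * ff u β y))
      (1 * (α * ff u β x) + x * (α * (Real.exp (-(β * Real.sqrt x) ^ u) / (2 * Real.sqrt x) * (1 - u * (β * Real.sqrt x) ^ u)))) x :=
    (hasDerivAt_id x).mul ((ff_hasDeriv hu hβ hx).const_mul α)
  have h2 : HasDerivAt (fun y => y * (α * ff u β y) - HH u α β y) _ x := h1.sub (HH_hasDeriv (α := α) (β := β) hu x)
  convert h2 using 1
  · rfl
  ring

lemma qq_zero : qq u α β 0 = 0 := by simp [qq, HH, ff]

lemma qq_strictMono (hu : 0 < u) (hα : 0 < α) (hβ : 0 < β) :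
    StrictMonoOn (qq u α β) (Icc 0 (mm u β)) := by
  apply strictMonoOn_of_deriv_pos (convex_Icc _ _) (qq_cont hu).continuousOn
  intro x hx
  rw [interior_Icc] at hx
  rw [(qq_hasDeriv hu hβ hx.1).deriv]
  exact mul_pos hx.1 (mul_pos hα (ffderiv_pos hu hβ hx.1 hx.2))

lemma qq_strictAnti (hu : 0 < u) (hα : 0 < α) (hβ : 0 < β) :
    StrictAntiOn (qq u α β) (Ici (mm u β)) := by
  apply strictAntiOn_of_deriv_neg (convex_Ici _) (qq_cont hu).continuousOn
  intro x hx
  rw [interior_Ici] at hx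
  have hx0 : 0 < x := lt_trans (mm_pos hu hβ) hx
  rw [(qq_hasDeriv hu hβ hx0).deriv]
  exact mul_neg_of_pos_of_neg hx0 (mul_neg_of_pos_of_neg hα (ffderiv_neg hu hβ hx))

lemma pp_hasDeriv (hu : 0 < u) (hx : 0 < x) :
    HasDerivAt (pp u α β) (qq u α β x / x ^ 2) x := by
  have h : HasDerivAt (fun y => HH u α β y / y) _ x := (HH_hasDeriv (α := α) (β := β) hu x).div (hasDerivAt_id x) hx.ne'
  convert h using 1
  · rfl
  rw [qq]
  field_simp

lemma pp_contOn (hu : 0 < u) {s : Set ℝ} (hs : ∀ y ∈ s, y ≠ 0) : ContinuousOn (pp u α β) s :=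
  ContinuousOn.div (HH_cont hu).continuousOn continuousOn_id hs

end Facts


lemma tendsto_sqrt_atTop' : Tendsto Real.sqrt atTop atTop := by
  have h : Tendsto (fun x : ℝ => x ^ (1/2 : ℝ)) atTop atTop := tendsto_rpow_atTop (by norm_num)
  exact h.congr (fun x => (Real.sqrt_eq_rpow x).symm)

lemma tendc {u β : ℝ} (hu : 0 < u) (hβ : 0 < β) (c : ℝ) :
    Tendsto (fun x => (β * Real.sqrt x) ^ c * Real.exp (-(β * Real.sqrt x) ^ u)) atTop (𝓝 0) := by
  have hG : Tendsto (fun y : ℝ => y ^ (c/u) * Real.exp (-y)) atTop (𝓝 0) := by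
    have := tendsto_rpow_mul_exp_neg_mul_atTop_nhds_zero (c/u) 1 one_pos
    simpa using this
  have hinner : Tendsto (fun x : ℝ => (β * Real.sqrt x) ^ u) atTop atTop :=
    (tendsto_rpow_atTop hu).comp (tendsto_sqrt_atTop'.const_mul_atTop hβ)
  have h := hG.comp hinner
  apply h.congr
  intro x
  have hb : (0:ℝ) ≤ β * Real.sqrt x := by positivity
  simp only [Function.comp_apply]
  rw [← Real.rpow_mul hb]
  congr 2
  field_simp

lemma tend_ff {u β : ℝ} (hu : 0 < u) (hβ : 0 < β) : Tendsto (ff u β) atTop (𝓝 0) := by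
  have h := (tendc hu hβ 1).const_mul β⁻¹
  simp only [mul_zero] at h
  apply h.congr
  intro x
  rw [Real.rpow_one, ff]
  field_simp

lemma tend_xff {u β : ℝ} (hu : 0 < u) (hβ : 0 < β) :
    Tendsto (fun x => x * ff u β x) atTop (𝓝 0) := by
  have h := (tendc hu hβ 3).const_mul (β ^ (3:ℕ))⁻¹
  simp only [mul_zero] at h
  apply h.congr' ?_
  filter_upwards [eventually_ge_atTop (0:ℝ)] with x hx
  have hsq : Real.sqrt x * Real.sqrt x = x := Real.mul_self_sqrt hx
  rw [show ((β * Real.sqrt x) ^ (3:ℝ)) = (β * Real.sqrt x) ^ (3:ℕ) from Real.rpow_natCast _ 3]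
  rw [ff]
  field_simp
  linear_combination (Real.sqrt x) * hsq

lemma key (u α β : ℝ) (hu : 0 < u) (hα : 0 < α) (hβ : 0 < β) :
    ∃ Fc : ℝ, 0 < Fc ∧
      (∀ F : ℝ, 0 < F → F < Fc → {x : ℝ | 0 ≤ x ∧ F ^ 2 * HH u α β x = x} = {0}) ∧
      (∀ F : ℝ, Fc < F → ∃ l₁ xs : ℝ, 0 < l₁ ∧ l₁ < xs ∧
          {x : ℝ | 0 ≤ x ∧ F ^ 2 * HH u α β x = x} = {0, l₁, xs}) := by
  set m := mm u β with hm
  have hmpos : 0 < m := mm_pos hu hβ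
  have hHmono : MonotoneOn (HH u α β) (Set.Ici 0) := (HH_strictMono hu hα).monotoneOn
  have hqm : 0 < qq u α β m := by
    have h := qq_strictMono hu hα hβ (Set.left_mem_Icc.mpr hmpos.le)
      (Set.right_mem_Icc.mpr hmpos.le) hmpos
    rwa [qq_zero] at h
  -- find X with qq X < 0
  obtain ⟨X, hmX, hqX⟩ : ∃ X, m < X ∧ qq u α β X < 0 := by
    have h1 : Tendsto (fun x => α * (x * ff u β x)) atTop (𝓝 0) := by
      have := (tend_xff hu hβ).const_mul α
      simpa using this
    have hHm : 0 < HH u α β m := HH_pos hu hα hmpos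
    have h2 : ∀ᶠ x in atTop, α * (x * ff u β x) < HH u α β m := h1.eventually_lt_const hHm
    obtain ⟨X, hX1, hX2⟩ := (h2.and (eventually_gt_atTop m)).exists
    refine ⟨X, hX2, ?_⟩
    have h3 : HH u α β m ≤ HH u α β X :=
      hHmono (Set.mem_Ici.mpr hmpos.le) (Set.mem_Ici.mpr (hmpos.le.trans hX2.le)) hX2.le
    have : qq u α β X = α * (X * ff u β X) - HH u α β X := by rw [qq]; ring
    rw [this]
    linarith
  -- x₀
  obtain ⟨x₀, hx₀mem, hx₀⟩ :=
    intermediate_value_Icc' hmX.le (qq_cont hu).continuousOn ⟨hqX.le, hqm.le⟩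
  have hmx₀ : m < x₀ := by
    rcases eq_or_lt_of_le hx₀mem.1 with h | h
    · exfalso; rw [h, hx₀] at hqm; exact lt_irrefl _ hqm
    · exact h
  have hx₀pos : 0 < x₀ := hmpos.trans hmx₀
  -- sign of qq on both sides of x₀
  have hqpos : ∀ y, 0 < y → y < x₀ → 0 < qq u α β y := by
    intro y hy hylt
    rcases le_or_gt y m with h | h
    · have := qq_strictMono hu hα hβ (Set.left_mem_Icc.mpr hmpos.le) ⟨hy.le, h⟩ hy
      rwa [qq_zero] at this
    · have := qq_strictAnti hu hα hβ (Set.mem_Ici.mpr h.le) (Set.mem_Ici.mpr hmx₀.le) hylt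
      rwa [hx₀] at this
  have hqneg : ∀ y, x₀ < y → qq u α β y < 0 := by
    intro y hy
    have := qq_strictAnti hu hα hβ (Set.mem_Ici.mpr hmx₀.le)
      (Set.mem_Ici.mpr (hmx₀.le.trans hy.le)) hy
    rwa [hx₀] at this
  -- monotonicity of pp
  have hψmono : StrictMonoOn (pp u α β) (Set.Ioc 0 x₀) := by
    apply strictMonoOn_of_deriv_pos (convex_Ioc _ _) (pp_contOn hu (fun y hy => hy.1.ne'))
    intro x hx
    rw [interior_Ioc] at hx
    rw [(pp_hasDeriv hu hx.1).deriv]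
    exact div_pos (hqpos _ hx.1 hx.2) (pow_pos hx.1 2)
  have hψanti : StrictAntiOn (pp u α β) (Set.Ici x₀) := by
    apply strictAntiOn_of_deriv_neg (convex_Ici _)
      (pp_contOn hu (fun y hy => (hx₀pos.trans_le hy).ne'))
    intro x hx
    rw [interior_Ici] at hx
    have hx0 : 0 < x := hx₀pos.trans hx
    rw [(pp_hasDeriv hu hx0).deriv]
    exact div_neg_of_neg_of_pos (hqneg _ hx) (pow_pos hx0 2)
  set M := pp u α β x₀ with hMdef
  have hMpos : 0 < M := div_pos (HH_pos hu hα hx₀pos) hx₀pos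
  have hψle : ∀ y, 0 < y → pp u α β y ≤ M := by
    intro y hy
    rcases le_or_gt y x₀ with h | h
    · rcases eq_or_lt_of_le h with h' | h'
      · rw [h']
      · exact (hψmono ⟨hy, h⟩ (Set.right_mem_Ioc.mpr hx₀pos) h').le
    · exact (hψanti (Set.self_mem_Ici) (Set.mem_Ici.mpr h.le) h).le
  have hfix_iff : ∀ F : ℝ, 0 < F → ∀ y, 0 < y →
      (F ^ 2 * HH u α β y = y ↔ pp u α β y = 1 / F ^ 2) := by
    intro F hF y hy
    rw [pp]
    rw [div_eq_div_iff hy.ne' (by positivity : (F:ℝ) ^ 2 ≠ 0)]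
    constructor <;> intro h <;> linarith
  have hsM : 0 < Real.sqrt M := Real.sqrt_pos.mpr hMpos
  refine ⟨1 / Real.sqrt M, one_div_pos.mpr hsM, ?_, ?_⟩
  · -- subcritical
    intro F hF hFlt
    ext x
    simp only [Set.mem_setOf_eq, Set.mem_singleton_iff]
    constructor
    · rintro ⟨hx0, hfix⟩
      by_contra hne
      have hx : 0 < x := lt_of_le_of_ne hx0 (Ne.symm hne)
      have hppx : pp u α β x = 1 / F ^ 2 := (hfix_iff F hF x hx).mp hfix
      have hFc : F ^ 2 < 1 / M := by
        have h1 : F ^ 2 < (1 / Real.sqrt M) ^ 2 := by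
          apply pow_lt_pow_left₀ hFlt hF.le
          norm_num
        rwa [div_pow, one_pow, Real.sq_sqrt hMpos.le] at h1
      have h2 : M < 1 / F ^ 2 := by
        rw [lt_div_iff₀ hMpos] at hFc
        rw [lt_div_iff₀ (by positivity : (0:ℝ) < F ^ 2)]
        linarith
      have h3 := hψle x hx
      rw [hppx] at h3
      linarith
    · rintro rfl
      refine ⟨le_rfl, by rw [HH_zero]; ring⟩
  · -- supercritical
    intro F hF
    have hFpos : 0 < F := lt_trans (by positivity) hF
    have hinvlt : 1 / F ^ 2 < M := by
      have h1 : (1 / Real.sqrt M) ^ 2 < F ^ 2 := by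
        apply pow_lt_pow_left₀ hF (by positivity)
        norm_num
      rw [div_pow, one_pow, Real.sq_sqrt hMpos.le] at h1
      rw [div_lt_iff₀ hMpos] at h1
      rw [div_lt_iff₀ (by positivity : (0:ℝ) < F ^ 2)]
      linarith
    -- small point a with pp a < 1/F²
    have hcf : Tendsto (fun y => α * ff u β y) (𝓝 0) (𝓝 0) := by
      have h : ContinuousAt (fun y => α * ff u β y) 0 :=
        (continuous_const.mul (ff_cont hu)).continuousAt
      rwa [ContinuousAt, ff_zero, mul_zero] at h
    have hev : ∀ᶠ y in 𝓝 (0:ℝ), α * ff u β y < 1 / F ^ 2 :=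
      hcf.eventually_lt_const (by positivity)
    rw [Metric.eventually_nhds_iff] at hev
    obtain ⟨δ, hδ, hball⟩ := hev
    set a := min (δ/2) m with ha_def
    have ha0 : 0 < a := lt_min (by linarith) hmpos
    have ham : a ≤ m := min_le_right _ _
    have haδ : dist a 0 < δ := by
      rw [Real.dist_eq, sub_zero, abs_of_pos ha0]
      calc a ≤ δ/2 := min_le_left _ _
        _ < δ := by linarith
    have haf : α * ff u β a < 1 / F ^ 2 := hball haδ
    have hψa : pp u α β a ≤ α * ff u β a := by
      have hint : (∫ w in (0:ℝ)..a, ff u β w) ≤ ∫ _ in (0:ℝ)..a, ff u β a := by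
        apply intervalIntegral.integral_mono_on ha0.le
          ((ff_cont hu).intervalIntegrable _ _) (intervalIntegrable_const)
        intro x hx
        rcases eq_or_lt_of_le hx.1 with h' | h'
        · rw [← h', ff_zero]; exact ff_nonneg a
        · rcases eq_or_lt_of_le hx.2 with h'' | h''
          · rw [h'']
          · exact ((ff_strictMono hu hβ) ⟨hx.1, hx.2.trans ham⟩ ⟨ha0.le, ham⟩ h'').le
      rw [intervalIntegral.integral_const, sub_zero, smul_eq_mul] at hint
      rw [pp, div_le_iff₀ ha0, HH]
      calc α * ∫ w in (0:ℝ)..a, ff u β w ≤ α * (a * ff u β a) := by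
            apply mul_le_mul_of_nonneg_left hint hα.le
        _ = α * ff u β a * a := by ring
    -- l₁ via IVT on [a, x₀]
    have hax₀ : a < x₀ := lt_of_le_of_lt ham hmx₀
    obtain ⟨l₁, hl₁mem, hl₁⟩ :=
      intermediate_value_Icc hax₀.le
        (pp_contOn hu (fun y hy => (ha0.trans_le hy.1).ne'))
        ⟨(hψa.trans_lt haf).le, hinvlt.le⟩
    have hl₁x₀ : l₁ < x₀ := by
      rcases eq_or_lt_of_le hl₁mem.2 with h' | h'
      · exfalso; rw [h'] at hl₁; rw [← hMdef] at hl₁; exact hinvlt.ne hl₁.symm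
      · exact h'
    have hl₁pos : 0 < l₁ := ha0.trans_le hl₁mem.1
    -- Y and X for xs
    have hffY : ∀ᶠ y in atTop, α * ff u β y < 1 / F ^ 2 / 2 := by
      have h := (tend_ff hu hβ).const_mul α
      simp only [mul_zero] at h
      exact h.eventually_lt_const (by positivity)
    obtain ⟨Y, hYf, hYx₀⟩ := (hffY.and (eventually_ge_atTop x₀)).exists
    have hYpos : 0 < Y := hx₀pos.trans_le hYx₀
    set X := max (2 * F ^ 2 * HH u α β Y + 1) (Y + 1) with hX_def
    have hXY : Y < X := lt_of_lt_of_le (lt_add_one Y) (le_max_right _ _)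
    have hXpos : 0 < X := hYpos.trans hXY
    have hX1 : 2 * F ^ 2 * HH u α β Y + 1 ≤ X := le_max_left _ _
    have hHY : 0 < HH u α β Y := HH_pos hu hα hYpos
    have hHXbound : HH u α β X ≤ HH u α β Y + α * ((X - Y) * ff u β Y) := by
      have hsplit : (∫ w in (0:ℝ)..X, ff u β w)
          = (∫ w in (0:ℝ)..Y, ff u β w) + ∫ w in Y..X, ff u β w :=
        (intervalIntegral.integral_add_adjacent_intervals
          ((ff_cont hu).intervalIntegrable _ _) ((ff_cont hu).intervalIntegrable _ _)).symm
      have hint2 : (∫ w in Y..X, ff u β w) ≤ ∫ _ in Y..X, ff u β Y := by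
        apply intervalIntegral.integral_mono_on hXY.le
          ((ff_cont hu).intervalIntegrable _ _) (intervalIntegrable_const)
        intro x hx
        exact ff_anti hu hβ (Set.mem_Ici.mpr (hmx₀.le.trans hYx₀))
          (Set.mem_Ici.mpr ((hmx₀.le.trans hYx₀).trans hx.1)) hx.1
      rw [intervalIntegral.integral_const, smul_eq_mul] at hint2
      rw [HH, HH, hsplit]
      have h4 := mul_le_mul_of_nonneg_left hint2 hα.le
      linarith
    have hψX : pp u α β X < 1 / F ^ 2 := by
      have h1 : HH u α β Y / X < 1 / F ^ 2 / 2 := by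
        rw [show (1:ℝ) / F ^ 2 / 2 = 1 / (F ^ 2 * 2) by ring,
          div_lt_div_iff₀ hXpos (by positivity)]
        linarith
      have h2 : pp u α β X ≤ HH u α β Y / X + α * ff u β Y := by
        have hffY0 : 0 ≤ α * ff u β Y := mul_nonneg hα.le (ff_nonneg Y)
        have h2a : HH u α β X / X ≤ (HH u α β Y + α * ((X - Y) * ff u β Y)) / X := by
          apply div_le_div_of_nonneg_right hHXbound hXpos.le
        have h2b : (HH u α β Y + α * ((X - Y) * ff u β Y)) / X
            ≤ HH u α β Y / X + α * ff u β Y := by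
          rw [add_div]
          have h2c : α * ((X - Y) * ff u β Y) / X ≤ α * ff u β Y := by
            rw [div_le_iff₀ hXpos]
            nlinarith [mul_nonneg hffY0 hYpos.le]
          linarith
        rw [pp]
        linarith
      linarith
    -- xs via IVT on [x₀, X]
    have hx₀X : x₀ < X := lt_of_le_of_lt hYx₀ hXY
    obtain ⟨xs, hxsmem, hxs⟩ :=
      intermediate_value_Icc' hx₀X.le
        (pp_contOn hu (fun y hy => (hx₀pos.trans_le hy.1).ne'))
        ⟨hψX.le, hinvlt.le⟩
    have hxsgt : x₀ < xs := by
      rcases eq_or_lt_of_le hxsmem.1 with h' | h'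
      · exfalso; rw [← h'] at hxs; rw [← hMdef] at hxs; exact hinvlt.ne hxs.symm
      · exact h'
    refine ⟨l₁, xs, hl₁pos, hl₁x₀.trans hxsgt, ?_⟩
    ext x
    simp only [Set.mem_setOf_eq, Set.mem_insert_iff, Set.mem_singleton_iff]
    constructor
    · rintro ⟨hx0, hfix⟩
      rcases eq_or_lt_of_le hx0 with h | h
      · exact Or.inl h.symm
      right
      have hppx : pp u α β x = 1 / F ^ 2 := (hfix_iff F hFpos x h).mp hfix
      rcases le_or_gt x x₀ with hle | hgt
      · exact Or.inl (hψmono.injOn ⟨h, hle⟩ ⟨hl₁pos, hl₁x₀.le⟩ (by rw [hppx, hl₁]))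
      · exact Or.inr (hψanti.injOn (Set.mem_Ici.mpr hgt.le)
          (Set.mem_Ici.mpr hxsgt.le) (by rw [hppx, hxs]))
    · rintro (rfl | rfl | rfl)
      · exact ⟨le_rfl, by rw [HH_zero]; ring⟩
      · exact ⟨hl₁pos.le, (hfix_iff F hFpos _ hl₁pos).mpr hl₁⟩
      · exact ⟨(hx₀pos.trans hxsgt).le, (hfix_iff F hFpos _ (hx₀pos.trans hxsgt)).mpr hxs⟩


theorem critical_constant_exists (u : ℝ) (hu : 0 < u)
    (β α : ℝ)
    (hβ : β = (Gamma (3 / u) / Gamma (1 / u)) ^ ((1 : ℝ) / 2))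
    (hα : α = β * u / (2 * Gamma (1 / u)))
    (g : ℝ → ℝ → ℝ)
    (hg : ∀ F x : ℝ, g F x = F ^ 2 * α * ∫ w in (0 : ℝ)..x, Real.sqrt w * Real.exp (-(β * Real.sqrt w) ^ u)) :
    ∃ Fc : ℝ, 0 < Fc ∧
      (∀ F : ℝ, 0 < F → F < Fc → {x : ℝ | 0 ≤ x ∧ g F x = x} = {0}) ∧
      (∀ F : ℝ, Fc < F → ∃ l₁ xs : ℝ, 0 < l₁ ∧ l₁ < xs ∧
          {x : ℝ | 0 ≤ x ∧ g F x = x} = {0, l₁, xs}) := by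
  have hΓ1 : 0 < Real.Gamma (1 / u) := Real.Gamma_pos_of_pos (by positivity)
  have hΓ3 : 0 < Real.Gamma (3 / u) := Real.Gamma_pos_of_pos (by positivity)
  have hβ0 : 0 < β := by rw [hβ]; exact Real.rpow_pos_of_pos (by positivity) _
  have hα0 : 0 < α := by rw [hα]; positivity
  obtain ⟨Fc, hFc, h1, h2⟩ := key u α β hu hα0 hβ0
  have hset : ∀ F : ℝ, {x : ℝ | 0 ≤ x ∧ g F x = x}
      = {x : ℝ | 0 ≤ x ∧ F ^ 2 * HH u α β x = x} := by
    intro F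
    ext x
    simp only [Set.mem_setOf_eq, hg, HH, ff, mul_assoc]
  refine ⟨Fc, hFc, fun F hF hFlt => ?_, fun F hF => ?_⟩
  · rw [hset F]; exact h1 F hF hFlt
  · rw [hset F]; exact h2 F hF
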